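/- Let d ∈ ℕ, 0 ≤ s < d/2, 0 < b < min{4, d, 3d/2 − s, d/2 + 2 − s} and 0 < σ < (8−2b)/(d−2s). Then there exist real numbers a₂ ∈ [2,∞] and b₂ ∈ [2,∞) such that: (i) max{0, d/2 − b − dσ/2} < d/b₂ < min{d/2, d − (σ+1)(d−2s−4)/2}; (ii) (d−2s−4)σ/2 − 2 < 4/a₂ < dσ/2 + b + s; and (iii) d/2 − d/b₂ ≤ 4/a₂ ≤ min{2, d − 2d/b₂, s + d/2 − d/b₂}. -/
import Mathlib


open ENNReal

/-- The arithmetic claim that the system (3.29) of exponent inequalities admits a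
solution `(a₂, b₂)` with `a₂ ∈ [2,∞]` and `b₂ ∈ [2,∞)`. -/
theorem exponent_system_subcritical (d : ℕ) (hd : 0 < d) (s b σ : ℝ)
    (hs0 : 0 ≤ s) (hs : s < (d : ℝ) / 2)
    (hb0 : 0 < b)
    (hb : b < min (min 4 (d : ℝ)) (min (3 * (d : ℝ) / 2 - s) ((d : ℝ) / 2 + 2 - s)))
    (hσ0 : 0 < σ) (hσ : σ < (8 - 2 * b) / ((d : ℝ) - 2 * s)) :
    ∃ a₂ : ℝ≥0∞, 2 ≤ a₂ ∧ ∃ b₂ : ℝ, 2 ≤ b₂ ∧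
      (max 0 ((d : ℝ) / 2 - b - (d : ℝ) * σ / 2) < (d : ℝ) / b₂ ∧
        (d : ℝ) / b₂ < min ((d : ℝ) / 2) ((d : ℝ) - (σ + 1) * ((d : ℝ) - 2 * s - 4) / 2)) ∧
      (((d : ℝ) - 2 * s - 4) * σ / 2 - 2 < ((4 : ℝ≥0∞) / a₂).toReal ∧
        ((4 : ℝ≥0∞) / a₂).toReal < (d : ℝ) * σ / 2 + b + s) ∧
      ((d : ℝ) / 2 - (d : ℝ) / b₂ ≤ ((4 : ℝ≥0∞) / a₂).toReal ∧
        ((4 : ℝ≥0∞) / a₂).toReal ≤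
          min (min 2 ((d : ℝ) - 2 * (d : ℝ) / b₂)) (s + (d : ℝ) / 2 - (d : ℝ) / b₂)) := by
  have hd1 : (1 : ℝ) ≤ d := by exact_mod_cast hd
  have hd0 : (0 : ℝ) < d := by linarith
  have hds : (0 : ℝ) < (d : ℝ) - 2 * s := by linarith
  have hσ' : σ * ((d : ℝ) - 2 * s) < 8 - 2 * b := (lt_div_iff₀ hds).mp hσ
  -- find A with all needed bounds
  obtain ⟨A, hA0, hAL2, hAb, hAd2, hA2⟩ :
      ∃ A : ℝ, 0 < A ∧ ((d : ℝ) - 2 * s - 4) * σ / 2 - 2 < A ∧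
        A < b + (d : ℝ) * σ / 2 ∧ A < (d : ℝ) / 2 ∧ A ≤ 2 := by
    obtain ⟨U, hU0, hU1, hU2, hU3, hUL⟩ :
        ∃ U : ℝ, 0 < U ∧ U ≤ b + (d : ℝ) * σ / 2 ∧ U ≤ (d : ℝ) / 2 ∧ U ≤ 2 ∧
          ((d : ℝ) - 2 * s - 4) * σ / 2 - 2 < U := by
      refine ⟨min (min (b + (d : ℝ) * σ / 2) ((d : ℝ) / 2)) 2, ?_, ?_, ?_, ?_, ?_⟩
      · refine lt_min (lt_min ?_ ?_) two_pos
        · nlinarith [mul_pos hd0 hσ0]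
        · linarith
      · exact le_trans (min_le_left _ _) (min_le_left _ _)
      · exact le_trans (min_le_left _ _) (min_le_right _ _)
      · exact min_le_right _ _
      · rcases le_or_gt (((d : ℝ) - 2 * s - 4) * σ / 2 - 2) 0 with h | h
        · refine lt_of_le_of_lt h (lt_min (lt_min ?_ ?_) two_pos)
          · nlinarith [mul_pos hd0 hσ0]
          · linarith
        · have hpos : (0 : ℝ) < (d : ℝ) - 2 * s - 4 := by
            by_contra hc
            push_neg at hc
            nlinarith [mul_nonpos_of_nonpos_of_nonneg
              (by linarith : (d : ℝ) - 2 * s - 4 ≤ 0) hσ0.le]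
          refine lt_min (lt_min ?_ ?_) ?_
          · nlinarith [mul_nonneg hs0 hσ0.le]
          · nlinarith
          · nlinarith
    obtain ⟨M, hM0, hML2⟩ :
        ∃ M : ℝ, 0 ≤ M ∧ ((d : ℝ) - 2 * s - 4) * σ / 2 - 2 ≤ M ∧ M < U :=
      ⟨max 0 (((d : ℝ) - 2 * s - 4) * σ / 2 - 2), le_max_left _ _, le_max_right _ _,
        max_lt hU0 hUL⟩
    obtain ⟨hML2, hMU⟩ := hML2
    exact ⟨(M + U) / 2, by linarith, by linarith, by linarith, by linarith, by linarith⟩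
  set t : ℝ := (d : ℝ) / 2 - A with htdef
  have ht0 : 0 < t := by simp only [htdef]; linarith
  have htd2 : t < (d : ℝ) / 2 := by simp only [htdef]; linarith
  refine ⟨ENNReal.ofReal (4 / A), ?_, (d : ℝ) / t, ?_, ?_⟩
  · rw [show (2 : ℝ≥0∞) = ENNReal.ofReal 2 by norm_num]
    exact ENNReal.ofReal_le_ofReal ((le_div_iff₀ hA0).mpr (by linarith))
  · rw [le_div_iff₀ ht0]; simp only [htdef]; linarith
  · have hdb : (d : ℝ) / ((d : ℝ) / t) = t := by field_simp
    have hdb2 : 2 * (d : ℝ) / ((d : ℝ) / t) = 2 * t := by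
      rw [mul_div_assoc, hdb]
    have htr : ((4 : ℝ≥0∞) / ENNReal.ofReal (4 / A)).toReal = A := by
      rw [show (4 : ℝ≥0∞) = ENNReal.ofReal 4 by norm_num,
        ← ENNReal.ofReal_div_of_pos (by positivity),
        show (4 : ℝ) / (4 / A) = A by field_simp,
        ENNReal.toReal_ofReal hA0.le]
    rw [hdb, hdb2, htr]
    refine ⟨⟨max_lt (by simp only [htdef]; linarith) (by simp only [htdef]; linarith),
      lt_min (by simp only [htdef]; linarith) (by simp only [htdef]; linarith)⟩,
      ⟨by linarith, by linarith⟩,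
      by simp only [htdef]; linarith,
      le_min (le_min (by linarith) (by simp only [htdef]; linarith))
        (by simp only [htdef]; linarith)⟩
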